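/- arXiv:1506.04580 — 2 statements merged into one kernel-verified Lean document; each statement's English description precedes it below -/
import Mathlib

section
/- For any n×n real tridiagonal matrix Q (n≥3) with diagonal d_i, subdiagonal a_i, superdiagonal b_i, the trace of Q⁴ equals ∑_{i=1}^n d_i⁴ + ∑_{i=1}^{n-1} a_i b_i (4d_i² + 4 d_i d_{i+1} + 4 d_{i+1}² + 2 a_i b_i) + 4 ∑_{i=1}^{n-2} a_i b_i a_{i+1} b_{i+1}. -/
open Finset


section Tridiag
variable (d a b : ℕ → ℝ)

private def q (i j : ℕ) : ℝ :=
  if i = j then d i else if i = j + 1 then a j else if j = i + 1 then b i else 0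

private lemma q_diag {i j : ℕ} (h : i = j) : q d a b i j = d i := by
  subst h; simp [q]
private lemma q_sub {i j : ℕ} (h : i = j + 1) : q d a b i j = a j := by
  subst h; unfold q; rw [if_neg (by omega), if_pos rfl]
private lemma q_sup {i j : ℕ} (h : j = i + 1) : q d a b i j = b i := by
  subst h; unfold q; rw [if_neg (by omega), if_neg (by omega), if_pos rfl]
private lemma q_far {i j : ℕ} (h : j + 2 ≤ i ∨ i + 2 ≤ j) : q d a b i j = 0 := by
  unfold q; rw [if_neg (by omega), if_neg (by omega), if_neg (by omega)]

private lemma rowsum (F : ℕ → ℝ) {i n : ℕ} (h : i < n) :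
    ∑ j ∈ range n, q d a b i j * F j
      = (if i = 0 then 0 else a (i - 1) * F (i - 1)) + d i * F i
        + (if i + 1 < n then b i * F (i + 1) else 0) := by
  have hlow : ∑ j ∈ range i, q d a b i j * F j
      = (if i = 0 then 0 else a (i - 1) * F (i - 1)) := by
    cases i with
    | zero => simp
    | succ p =>
        rw [Finset.sum_range_succ]
        have hz : ∑ j ∈ range p, q d a b (p+1) j * F j = 0 :=
          Finset.sum_eq_zero fun j hj => by
            rw [q_far d a b (by rw [Finset.mem_range] at hj; omega)]; ring
        rw [hz, q_sub d a b rfl]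
        simp
  rcases Nat.lt_or_ge (i+1) n with hn | hn
  · rw [Finset.range_eq_Ico, ← Finset.sum_Ico_consecutive _ (Nat.zero_le (i+2)) (by omega : i + 2 ≤ n),
      ← Finset.range_eq_Ico, Finset.sum_range_succ, Finset.sum_range_succ, hlow]
    have hz2 : ∑ j ∈ Ico (i+2) n, q d a b i j * F j = 0 :=
      Finset.sum_eq_zero fun j hj => by
        rw [q_far d a b (by rw [Finset.mem_Ico] at hj; omega)]; ring
    rw [hz2, q_diag d a b rfl, q_sup d a b rfl, if_pos hn]
    ring
  · have hn' : n = i + 1 := by omega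
    subst hn'
    rw [Finset.sum_range_succ, hlow, q_diag d a b rfl,
      if_neg (show ¬ (i + 1 < i + 1) by omega)]
    ring

private def A (n i : ℕ) : ℝ :=
  ∑ j ∈ range n, q d a b i j *
    ∑ k ∈ range n, q d a b j k *
      ∑ l ∈ range n, q d a b k l * q d a b l i

private def T (n : ℕ) : ℝ := ∑ i ∈ range n, A d a b n i
private lemma key (m : ℕ) : T d a b (m + 3)
    = (∑ i ∈ range (m+3), d i ^ 4)
      + (∑ i ∈ range (m+2), a i * b i *
          (4 * d i ^ 2 + 4 * d i * d (i+1) + 4 * d (i+1) ^ 2 + 2 * a i * b i))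
      + 4 * ∑ i ∈ range (m+1), a i * b i * a (i+1) * b (i+1) := by
  induction m with
  | zero =>
      have h3 : ∀ f : ℕ → ℝ, ∑ i ∈ range 3, f i = f 0 + f 1 + f 2 := by
        intro f
        rw [show (3:ℕ) = 2+1 from rfl, Finset.sum_range_succ,
          show (2:ℕ) = 1+1 from rfl, Finset.sum_range_succ,
          show (1:ℕ) = 0+1 from rfl, Finset.sum_range_succ, Finset.sum_range_zero]
        norm_num
      have h2 : ∀ f : ℕ → ℝ, ∑ i ∈ range 2, f i = f 0 + f 1 := by
        intro f
        rw [show (2:ℕ) = 1+1 from rfl, Finset.sum_range_succ,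
          show (1:ℕ) = 0+1 from rfl, Finset.sum_range_succ, Finset.sum_range_zero]
        norm_num
      have h1 : ∀ f : ℕ → ℝ, ∑ i ∈ range 1, f i = f 0 := by
        intro f
        rw [show (1:ℕ) = 0+1 from rfl, Finset.sum_range_succ, Finset.sum_range_zero]
        norm_num
      show T d a b 3 = _
      unfold T
      rw [h3, h3, h2, h1]
      simp only [A]
      simp (disch := omega) only [rowsum, q_diag, q_sub, q_sup, q_far, if_pos, if_neg,
        Nat.add_sub_cancel, Nat.reduceSubDiff, Nat.reduceSub, Nat.reduceAdd,
        mul_zero, zero_mul, add_zero, zero_add, ite_self, ite_true, ite_false, reduceIte]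
      ring
  | succ m ih =>
      have hsplit4 : ∀ f : ℕ → ℝ, ∑ i ∈ range (m+4), f i
          = (∑ i ∈ range (m+1), f i) + f (m+1) + f (m+2) + f (m+3) := by
        intro f
        rw [show m+4 = (m+1)+1+1+1 from rfl, Finset.sum_range_succ, Finset.sum_range_succ,
          Finset.sum_range_succ]
      have hsplit3 : ∀ f : ℕ → ℝ, ∑ i ∈ range (m+3), f i
          = (∑ i ∈ range (m+1), f i) + f (m+1) + f (m+2) := by
        intro f
        rw [show m+3 = (m+1)+1+1 from rfl, Finset.sum_range_succ, Finset.sum_range_succ]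
      have hsplit2 : ∀ f : ℕ → ℝ, ∑ i ∈ range (m+2), f i
          = (∑ i ∈ range (m+1), f i) + f (m+1) := by
        intro f
        rw [show m+2 = (m+1)+1 from rfl, Finset.sum_range_succ]
      have hEXT : ∀ i ∈ range (m+1), A d a b (m+4) i = A d a b (m+3) i := by
        intro i hi
        rw [Finset.mem_range] at hi
        simp only [A]
        simp (disch := omega) only [rowsum, q_diag, q_sub, q_sup, q_far, if_pos, if_neg,
          Nat.add_sub_cancel, Nat.reduceSubDiff, mul_zero, zero_mul, add_zero, zero_add,
          ite_self, ite_true, ite_false, reduceIte]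
      have hT4 : T d a b (m+4)
          = (∑ i ∈ range (m+1), A d a b (m+3) i)
            + A d a b (m+4) (m+1) + A d a b (m+4) (m+2) + A d a b (m+4) (m+3) := by
        unfold T
        rw [hsplit4, Finset.sum_congr rfl hEXT]
      have hT3 : (∑ i ∈ range (m+1), A d a b (m+3) i)
          = T d a b (m+3) - A d a b (m+3) (m+1) - A d a b (m+3) (m+2) := by
        unfold T; rw [hsplit3]; ring
      rw [show m+1+3 = m+4 from rfl, show m+1+2 = m+3 from rfl, show m+1+1 = m+2 from rfl]
      rw [hT4, hT3, ih]
      simp only [hsplit4, hsplit3, hsplit2]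
      simp only [A]
      simp (disch := omega) only [rowsum, q_diag, q_sub, q_sup, q_far, if_pos, if_neg,
        Nat.add_sub_cancel, Nat.reduceSubDiff, mul_zero, zero_mul, add_zero, zero_add,
        ite_self, ite_true, ite_false, reduceIte]
      ring
end Tridiag


/-- Trace of the fourth power of an `n × n` tridiagonal matrix (0-indexed:
`d i` is the `i`-th diagonal entry, `a i` the subdiagonal entry `Q (i+1) i`,
`b i` the superdiagonal entry `Q i (i+1)`). -/
theorem trace_fourth_power_tridiagonal (n : ℕ) (hn : 3 ≤ n) (d a b : ℕ → ℝ)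
    (Q : Matrix (Fin n) (Fin n) ℝ)
    (hQ : ∀ i j : Fin n, Q i j =
      if (i : ℕ) = (j : ℕ) then d i
      else if (i : ℕ) = (j : ℕ) + 1 then a j
      else if (j : ℕ) = (i : ℕ) + 1 then b i
      else 0) :
    Matrix.trace (Q ^ 4) =
      (∑ i ∈ Finset.range n, (d i) ^ 4)
      + (∑ i ∈ Finset.range (n - 1),
          a i * b i * (4 * (d i) ^ 2 + 4 * d i * d (i + 1) + 4 * (d (i + 1)) ^ 2
            + 2 * a i * b i))
      + 4 * ∑ i ∈ Finset.range (n - 2), a i * b i * a (i + 1) * b (i + 1) := by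
  obtain ⟨m, rfl⟩ : ∃ m, n = m + 3 := ⟨n - 3, by omega⟩
  have hQ' : ∀ i j : Fin (m + 3), Q i j = q d a b (i : ℕ) (j : ℕ) := by
    intro i j; rw [hQ]; rfl
  have h4 : Q ^ 4 = Q * (Q * (Q * Q)) := by
    rw [pow_succ', pow_succ', pow_succ', pow_one]
  have htr : Matrix.trace (Q ^ 4) = T d a b (m + 3) := by
    rw [h4]
    unfold T A
    rw [Matrix.trace]
    simp only [Matrix.diag_apply, Matrix.mul_apply, hQ']
    simp only [← Fin.sum_univ_eq_sum_range]
  rw [htr, show m+3-1 = m+2 from rfl, show m+3-2 = m+1 from rfl, key]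
end

section
/- Let k₁, k₂ be even positive integers. Then the sum over pairs (γ₁, γ₂) of loopless circuits of lengths k₁ and k₂ on ℤ that overlap in at least one edge (with γ₂ having leftmost vertex 0 and γ₁ having leftmost vertex any integer), of ∑_i I_i(γ₁) I_i(γ₂), where I_i(γ) is the number of traversals of the edge {i, i+1} by γ, equals k₁ k₂ C(k₁, k₁/2) C(k₂, k₂/2). -/
open Finset

noncomputable section

/-- Partial sum of the first `j` steps of a `±1`-step sequence
(`true` = up-step `+1`, `false` = down-step `-1`). -/
def stepPSum {k : ℕ} (s : Fin k → Bool) (j : ℕ) : ℤ :=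
  ∑ t ∈ Finset.univ.filter (fun t : Fin k => (t : ℕ) < j),
    (if s t then (1 : ℤ) else -1)

/-- The minimum of the partial sums of a step sequence. -/
def stepMin {k : ℕ} (s : Fin k → Bool) : ℤ :=
  ((Finset.range (k + 1)).image (stepPSum s)).min'
    ((Finset.nonempty_range_iff.mpr k.succ_ne_zero).image _)

/-- The `j`-th vertex of the circuit with step sequence `s` placed so that
its leftmost vertex is `v`. -/
def circVert {k : ℕ} (v : ℤ) (s : Fin k → Bool) (j : ℕ) : ℤ :=
  v + stepPSum s j - stepMin s

/-- `I_i(γ)`: the number of traversals of the edge `{i, i+1}` by the circuit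
with step sequence `s` and leftmost vertex `v`. -/
def edgeCount {k : ℕ} (v : ℤ) (s : Fin k → Bool) (i : ℤ) : ℕ :=
  ((Finset.range k).filter
    (fun j => min (circVert v s j) (circVert v s (j + 1)) = i)).card

/-! ### Auxiliary lemmas -/

lemma abs_stepPSum_sub {k : ℕ} (s : Fin k → Bool) (a b : ℕ) :
    |stepPSum s a - stepPSum s b| ≤ (k : ℤ) := by
  wlog h : b ≤ a generalizing a b
  · rw [abs_sub_comm]; exact this b a (le_of_not_ge h)
  have hsub : (univ.filter fun t : Fin k => (t : ℕ) < b) ⊆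
      (univ.filter fun t : Fin k => (t : ℕ) < a) := by
    intro t ht
    simp only [mem_filter, mem_univ, true_and] at ht ⊢
    omega
  have heq : stepPSum s a - stepPSum s b =
      ∑ t ∈ (univ.filter fun t : Fin k => (t : ℕ) < a) \
        (univ.filter fun t : Fin k => (t : ℕ) < b),
        (if s t then (1 : ℤ) else -1) := by
    rw [stepPSum, stepPSum, ← Finset.sum_sdiff hsub]; ring
  rw [heq]
  calc |∑ t ∈ _, (if s t then (1:ℤ) else -1)|
      ≤ ∑ t ∈ ((univ.filter fun t : Fin k => (t : ℕ) < a) \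
        (univ.filter fun t : Fin k => (t : ℕ) < b)), |if s t then (1:ℤ) else -1| :=
        Finset.abs_sum_le_sum_abs _ _
    _ ≤ ∑ _t ∈ ((univ.filter fun t : Fin k => (t : ℕ) < a) \
        (univ.filter fun t : Fin k => (t : ℕ) < b)), 1 := by
        refine Finset.sum_le_sum fun t _ => ?_
        cases s t <;> simp
    _ ≤ (k : ℤ) := by
        rw [Finset.sum_const, nsmul_eq_mul, mul_one]
        have h : ((univ.filter fun t : Fin k => (t : ℕ) < a) \
            (univ.filter fun t : Fin k => (t : ℕ) < b)).card ≤ k := by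
          simpa using Finset.card_le_univ ((univ.filter fun t : Fin k => (t : ℕ) < a) \
            (univ.filter fun t : Fin k => (t : ℕ) < b))
        exact_mod_cast h

lemma stepMin_le {k : ℕ} (s : Fin k → Bool) {j : ℕ} (hj : j ≤ k) :
    stepMin s ≤ stepPSum s j :=
  Finset.min'_le _ _ (Finset.mem_image.mpr ⟨j, Finset.mem_range.mpr (by omega), rfl⟩)

lemma circVert_nonneg {k : ℕ} (s : Fin k → Bool) {j : ℕ} (hj : j ≤ k) :
    0 ≤ circVert 0 s j := by
  have := stepMin_le s hj
  simp only [circVert]; linarith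

lemma circVert_le {k : ℕ} (s : Fin k → Bool) (j : ℕ) :
    circVert 0 s j ≤ (k : ℤ) := by
  obtain ⟨m, hm, hmv⟩ := Finset.mem_image.mp (Finset.min'_mem
    ((Finset.range (k + 1)).image (stepPSum s))
    ((Finset.nonempty_range_iff.mpr k.succ_ne_zero).image _))
  have h1 : stepMin s = stepPSum s m := hmv.symm
  have h2 := abs_le.mp (abs_stepPSum_sub s j m)
  simp only [circVert, h1]
  linarith [h2.2]

lemma circVert_add {k : ℕ} (v : ℤ) (s : Fin k → Bool) (j : ℕ) :
    circVert v s j = v + circVert 0 s j := by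
  simp only [circVert]; ring

/-- `edgeCount` in terms of the `v = 0` placement. -/
lemma edgeCount_eq {k : ℕ} (v : ℤ) (s : Fin k → Bool) (i : ℤ) :
    edgeCount v s i = ((Finset.range k).filter
      (fun j => v + min (circVert 0 s j) (circVert 0 s (j + 1)) = i)).card := by
  unfold edgeCount
  congr 1
  apply Finset.filter_congr
  intro j _
  rw [circVert_add v s j, circVert_add v s (j + 1), min_add_add_left]

/-- The central geometric fact: for any two step sequences, the total number of
(placement, edge, step, step) coincidences is `k₁ * k₂`. -/
lemma pair_sum {k₁ k₂ : ℕ} (s₁ : Fin k₁ → Bool) (s₂ : Fin k₂ → Bool) :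
    ∑ v ∈ Finset.Icc (-(k₁ + k₂ : ℤ)) (k₁ + k₂),
      ∑ i ∈ Finset.Icc (-(k₁ + k₂ : ℤ)) (k₁ + k₂),
        edgeCount v s₁ i * edgeCount 0 s₂ i = k₁ * k₂ := by
  set V : Finset ℤ := Finset.Icc (-(k₁ + k₂ : ℤ)) (k₁ + k₂) with hV
  set a : ℕ → ℤ := fun j => min (circVert 0 s₁ j) (circVert 0 s₁ (j + 1)) with ha
  set b : ℕ → ℤ := fun j => min (circVert 0 s₂ j) (circVert 0 s₂ (j + 1)) with hb
  have hb_mem : ∀ j ∈ Finset.range k₂, b j ∈ V := by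
    intro j hj
    rw [Finset.mem_range] at hj
    rw [hV, Finset.mem_Icc]
    have h0 : 0 ≤ b j := le_min (circVert_nonneg s₂ (by omega)) (circVert_nonneg s₂ (by omega))
    have h1 : b j ≤ (k₂ : ℤ) := (min_le_left _ _).trans (circVert_le s₂ j)
    have hk1 : (0:ℤ) ≤ k₁ := Int.natCast_nonneg _
    constructor <;> push_cast <;> linarith
  have ha_bd : ∀ j ∈ Finset.range k₁, 0 ≤ a j ∧ a j ≤ (k₁ : ℤ) := by
    intro j hj
    rw [Finset.mem_range] at hj
    exact ⟨le_min (circVert_nonneg s₁ (by omega)) (circVert_nonneg s₁ (by omega)),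
      (min_le_left _ _).trans (circVert_le s₁ j)⟩
  have step1 : ∀ v : ℤ, ∑ i ∈ V, edgeCount v s₁ i * edgeCount 0 s₂ i =
      ∑ j₁ ∈ Finset.range k₁, ∑ j₂ ∈ Finset.range k₂,
        if v + a j₁ = b j₂ then 1 else 0 := by
    intro v
    have h1 : ∀ i : ℤ, edgeCount v s₁ i =
        ∑ j₁ ∈ Finset.range k₁, if v + a j₁ = i then 1 else 0 := by
      intro i; rw [edgeCount_eq, Finset.card_filter]
    have h2 : ∀ i : ℤ, edgeCount 0 s₂ i =
        ∑ j₂ ∈ Finset.range k₂, if b j₂ = i then 1 else 0 := by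
      intro i
      rw [edgeCount_eq, Finset.card_filter]
      exact Finset.sum_congr rfl fun j _ => by rw [zero_add]
    simp_rw [h1, h2, Finset.sum_mul_sum]
    rw [Finset.sum_comm]
    refine Finset.sum_congr rfl fun j₁ _ => ?_
    rw [Finset.sum_comm]
    refine Finset.sum_congr rfl fun j₂ hj₂ => ?_
    simp_rw [mul_ite, mul_one, mul_zero]
    rw [Finset.sum_ite_eq V (b j₂) (fun i => if v + a j₁ = i then 1 else 0),
      if_pos (hb_mem j₂ hj₂)]
  simp_rw [step1]
  rw [Finset.sum_comm]
  have step2 : ∀ j₁ ∈ Finset.range k₁, ∀ j₂ ∈ Finset.range k₂,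
      ∑ v ∈ V, (if v + a j₁ = b j₂ then (1:ℕ) else 0) = 1 := by
    intro j₁ hj₁ j₂ hj₂
    have : ∀ v : ℤ, (v + a j₁ = b j₂) = (v = b j₂ - a j₁) := by
      intro v
      apply propext
      constructor <;> intro h <;> linarith
    simp_rw [this]
    rw [Finset.sum_ite_eq' V (b j₂ - a j₁) (fun _ => (1:ℕ))]
    rw [if_pos]
    have hj₂' := Finset.mem_range.mp hj₂
    have h0b : 0 ≤ b j₂ :=
      le_min (circVert_nonneg s₂ (by omega)) (circVert_nonneg s₂ (by omega))
    have h1b : b j₂ ≤ (k₂ : ℤ) := (min_le_left _ _).trans (circVert_le s₂ j₂)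
    have ham := ha_bd j₁ hj₁
    have hk1 : (0:ℤ) ≤ k₁ := Int.natCast_nonneg _
    rw [hV, Finset.mem_Icc]
    constructor <;> push_cast <;> linarith [ham.1, ham.2]
  calc ∑ j₁ ∈ Finset.range k₁, ∑ v ∈ V, ∑ j₂ ∈ Finset.range k₂,
        (if v + a j₁ = b j₂ then (1:ℕ) else 0)
      = ∑ j₁ ∈ Finset.range k₁, ∑ j₂ ∈ Finset.range k₂,
        ∑ v ∈ V, (if v + a j₁ = b j₂ then (1:ℕ) else 0) :=
        Finset.sum_congr rfl fun j₁ _ => Finset.sum_comm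
    _ = ∑ j₁ ∈ Finset.range k₁, ∑ j₂ ∈ Finset.range k₂, 1 := by
        refine Finset.sum_congr rfl fun j₁ hj₁ => Finset.sum_congr rfl fun j₂ hj₂ => ?_
        exact step2 j₁ hj₁ j₂ hj₂
    _ = k₁ * k₂ := by simp [mul_comm]

lemma stepPSum_full {k : ℕ} (s : Fin k → Bool) :
    stepPSum s k = 2 * ((univ.filter fun t => s t).card : ℤ) - k := by
  rw [stepPSum, Finset.filter_true_of_mem (fun t _ => t.isLt)]
  have h : ∀ t : Fin k, (if s t then (1:ℤ) else -1) = 2 * (if s t then 1 else 0) - 1 := by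
    intro t; cases s t <;> simp
  simp_rw [h]
  rw [Finset.sum_sub_distrib, ← Finset.mul_sum, Finset.sum_boole, Finset.sum_const,
    Finset.card_univ, Fintype.card_fin, nsmul_eq_mul, mul_one]

lemma count_balanced {k : ℕ} (he : Even k) :
    (univ.filter fun s : Fin k → Bool => stepPSum s k = 0).card = k.choose (k / 2) := by
  obtain ⟨m, hm⟩ := he
  have hiff : ∀ s : Fin k → Bool,
      (stepPSum s k = 0) ↔ ((univ.filter fun t => s t).card = k / 2) := by
    intro s
    rw [stepPSum_full]
    constructor <;> intro h <;> omega
  rw [Finset.filter_congr fun s _ => by rw [hiff s]]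
  have h := Finset.card_powersetCard (k/2) (univ : Finset (Fin k))
  rw [Finset.card_univ, Fintype.card_fin] at h
  rw [← h]
  apply Finset.card_bij' (fun s _ => univ.filter fun t => s t)
    (fun A _ => fun t => decide (t ∈ A))
  · intro s _; funext t; simp
  · intro A _; ext t; simp
  · intro s hs
    rw [Finset.mem_powersetCard]
    exact ⟨Finset.subset_univ _, (Finset.mem_filter.mp hs).2⟩
  · intro A hA
    rw [Finset.mem_filter]
    refine ⟨Finset.mem_univ _, ?_⟩
    rw [Finset.mem_powersetCard] at hA
    rw [← hA.2]
    congr 1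
    ext t
    simp

/-- For even `k₁, k₂`, the sum over all pairs of loopless circuits
`(γ₁, γ₂)` of lengths `k₁, k₂` (with `γ₂` having leftmost vertex `0` and `γ₁`
placed at any leftmost vertex `v`) of `∑_i I_i(γ₁) I_i(γ₂)` equals
`k₁ k₂ C(k₁, k₁/2) C(k₂, k₂/2)`. (Only overlapping placements and edges
contribute, so the finite ranges below capture the full sum.) -/
theorem sum_edge_overlaps_eq (k₁ k₂ : ℕ) (h₁ : 0 < k₁) (he₁ : Even k₁)
    (h₂ : 0 < k₂) (he₂ : Even k₂) :
    ∑ v ∈ Finset.Icc (-(k₁ + k₂ : ℤ)) (k₁ + k₂),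
      ∑ s₁ ∈ Finset.univ.filter (fun s : Fin k₁ → Bool => stepPSum s k₁ = 0),
        ∑ s₂ ∈ Finset.univ.filter (fun s : Fin k₂ → Bool => stepPSum s k₂ = 0),
          ∑ i ∈ Finset.Icc (-(k₁ + k₂ : ℤ)) (k₁ + k₂),
            edgeCount v s₁ i * edgeCount 0 s₂ i =
      k₁ * k₂ * Nat.choose k₁ (k₁ / 2) * Nat.choose k₂ (k₂ / 2) := by
  rw [Finset.sum_comm]
  have h : ∀ s₁ : Fin k₁ → Bool,
      ∑ v ∈ Finset.Icc (-(k₁ + k₂ : ℤ)) (k₁ + k₂),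
        ∑ s₂ ∈ Finset.univ.filter (fun s : Fin k₂ → Bool => stepPSum s k₂ = 0),
          ∑ i ∈ Finset.Icc (-(k₁ + k₂ : ℤ)) (k₁ + k₂),
            edgeCount v s₁ i * edgeCount 0 s₂ i =
      ∑ s₂ ∈ Finset.univ.filter (fun s : Fin k₂ → Bool => stepPSum s k₂ = 0),
        (k₁ * k₂) := by
    intro s₁
    rw [Finset.sum_comm]
    exact Finset.sum_congr rfl fun s₂ _ => pair_sum s₁ s₂
  simp_rw [h, Finset.sum_const, count_balanced he₁, count_balanced he₂, smul_eq_mul]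
  ring

end
end
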